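/- Let m, d, s ∈ ℕ with m ≥ 3d. Suppose G is a graph whose vertex set is the disjoint union of independent sets I₁,…,I_s each of size m, and suppose α(G) < v(G)/(12d). Then there exist indices i₀, i₁, …, i_d ∈ [s], pairwise distinct, and a matching of size d in G with exactly one edge between I_{i_{j-1}} and I_{i_j} for each j ∈ [d]. -/
import Mathlib

private lemma lemA_stmt9 {V : Type*} [DecidableEq V] (G : SimpleGraph V)
    (m d s : ℕ) (I : Fin s → Finset V)
    (hdisj : ∀ i j, i ≠ j → Disjoint (I i) (I j))
    (hcard : ∀ i, (I i).card = m)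
    (R : Finset (Fin s)) (hR : R.Nonempty) :
    (∃ idx : Fin (d + 1) → Fin s, Function.Injective idx ∧
      ∃ a b : Fin d → V, (∀ j, G.Adj (a j) (b j)) ∧
        (∀ j : Fin d, a j ∈ I (idx j.castSucc) ∧ b j ∈ I (idx j.succ)) ∧
        (∀ j k : Fin d, j ≠ k → a j ≠ a k ∧ a j ≠ b k ∧ b j ≠ b k)) ∨
    (∃ P : Finset (Fin s), P ⊆ R ∧ P.Nonempty ∧ P.card ≤ d ∧
      ∃ e ∈ P, ∃ S : Finset V, S ⊆ I e ∧ m - 2*d ≤ S.card ∧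
        ∀ u ∈ S, ∀ i ∈ R, i ∉ P → ∀ v ∈ I i, ¬ G.Adj u v) := by
  classical
  obtain ⟨e0, he0⟩ := hR
  suffices h : ∀ n k, k + n = d → ∀ (idx : Fin (k+1) → Fin s) (a b : Fin k → V),
      Function.Injective idx → (∀ j, idx j ∈ R) → (∀ j, G.Adj (a j) (b j)) →
      (∀ j : Fin k, a j ∈ I (idx j.castSucc) ∧ b j ∈ I (idx j.succ)) →
      (∀ j l : Fin k, j ≠ l → a j ≠ a l ∧ a j ≠ b l ∧ b j ≠ b l) →
      (∃ idx : Fin (d + 1) → Fin s, Function.Injective idx ∧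
        ∃ a b : Fin d → V, (∀ j, G.Adj (a j) (b j)) ∧
          (∀ j : Fin d, a j ∈ I (idx j.castSucc) ∧ b j ∈ I (idx j.succ)) ∧
          (∀ j k : Fin d, j ≠ k → a j ≠ a k ∧ a j ≠ b k ∧ b j ≠ b k)) ∨
      (∃ P : Finset (Fin s), P ⊆ R ∧ P.Nonempty ∧ P.card ≤ d ∧
        ∃ e ∈ P, ∃ S : Finset V, S ⊆ I e ∧ m - 2*d ≤ S.card ∧
          ∀ u ∈ S, ∀ i ∈ R, i ∉ P → ∀ v ∈ I i, ¬ G.Adj u v) by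
    exact h d 0 (by omega) (fun _ => e0) Fin.elim0 Fin.elim0
      (fun x y _ => Fin.ext (by omega)) (fun _ => he0)
      (fun j => j.elim0) (fun j => j.elim0) (fun j => j.elim0)
  intro n
  induction n with
  | zero =>
    intro k hk idx a b h1 _ h3 h4 h5
    obtain rfl : k = d := by omega
    exact Or.inl ⟨idx, h1, a, b, h3, h4, h5⟩
  | succ n IH =>
    intro k hk idx a b hinj hmem hadj hparts hD
    by_cases hex : ∃ i, (i ∈ R ∧ i ∉ Finset.image idx Finset.univ) ∧
        ∃ u ∈ I (idx (Fin.last k)) \ Finset.image b Finset.univ, ∃ v ∈ I i, G.Adj u v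
    · obtain ⟨i, ⟨hiR, hini⟩, u, hu, v, hv, huv⟩ := hex
      have hu1 : u ∈ I (idx (Fin.last k)) := (Finset.mem_sdiff.mp hu).1
      have hu2 : u ∉ Finset.image b Finset.univ := (Finset.mem_sdiff.mp hu).2
      have hnotim : ∀ j, idx j ≠ i :=
        fun j h => hini (h ▸ Finset.mem_image_of_mem idx (Finset.mem_univ j))
      have hinj' : Function.Injective (Fin.snoc idx i : Fin (k+2) → Fin s) := by
        intro p q hpq
        rcases Fin.eq_castSucc_or_eq_last p with ⟨p₀, rfl⟩ | rfl
        · rcases Fin.eq_castSucc_or_eq_last q with ⟨q₀, rfl⟩ | rfl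
          · rw [Fin.snoc_castSucc, Fin.snoc_castSucc] at hpq
            exact congrArg Fin.castSucc (hinj hpq)
          · rw [Fin.snoc_castSucc, Fin.snoc_last] at hpq
            exact absurd hpq (hnotim p₀)
        · rcases Fin.eq_castSucc_or_eq_last q with ⟨q₀, rfl⟩ | rfl
          · rw [Fin.snoc_last, Fin.snoc_castSucc] at hpq
            exact absurd hpq.symm (hnotim q₀)
          · rfl
      have hmem' : ∀ j : Fin (k+2), (Fin.snoc idx i : Fin (k+2) → Fin s) j ∈ R := by
        intro j
        rcases Fin.eq_castSucc_or_eq_last j with ⟨j₀, rfl⟩ | rfl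
        · rw [Fin.snoc_castSucc]; exact hmem j₀
        · rw [Fin.snoc_last]; exact hiR
      have hadj' : ∀ j : Fin (k+1),
          G.Adj ((Fin.snoc a u : Fin (k+1) → V) j) ((Fin.snoc b v : Fin (k+1) → V) j) := by
        intro j
        rcases Fin.eq_castSucc_or_eq_last j with ⟨j₀, rfl⟩ | rfl
        · rw [Fin.snoc_castSucc, Fin.snoc_castSucc]; exact hadj j₀
        · rw [Fin.snoc_last, Fin.snoc_last]; exact huv
      have hparts' : ∀ j : Fin (k+1),
          (Fin.snoc a u : Fin (k+1) → V) j ∈ I ((Fin.snoc idx i : Fin (k+2) → Fin s) j.castSucc) ∧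
          (Fin.snoc b v : Fin (k+1) → V) j ∈ I ((Fin.snoc idx i : Fin (k+2) → Fin s) j.succ) := by
        intro j
        rcases Fin.eq_castSucc_or_eq_last j with ⟨j₀, rfl⟩ | rfl
        · constructor
          · rw [Fin.snoc_castSucc, Fin.snoc_castSucc]; exact (hparts j₀).1
          · rw [Fin.snoc_castSucc, Fin.succ_castSucc, Fin.snoc_castSucc]; exact (hparts j₀).2
        · constructor
          · rw [Fin.snoc_last, Fin.snoc_castSucc]; exact hu1
          · rw [Fin.snoc_last, Fin.succ_last, Fin.snoc_last]; exact hv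
      have hD' : ∀ j l : Fin (k+1), j ≠ l →
          (Fin.snoc a u : Fin (k+1) → V) j ≠ (Fin.snoc a u : Fin (k+1) → V) l ∧
          (Fin.snoc a u : Fin (k+1) → V) j ≠ (Fin.snoc b v : Fin (k+1) → V) l ∧
          (Fin.snoc b v : Fin (k+1) → V) j ≠ (Fin.snoc b v : Fin (k+1) → V) l := by
        have hne : ∀ (x y : V) (p q : Fin (k+2)), p ≠ q →
            x ∈ I ((Fin.snoc idx i : Fin (k+2) → Fin s) p) →
            y ∈ I ((Fin.snoc idx i : Fin (k+2) → Fin s) q) → x ≠ y := by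
          intro x y p q hpq hx hy hxy
          subst hxy
          exact (Finset.disjoint_left.mp (hdisj _ _ fun h => hpq (hinj' h)) hx) hy
        intro j l hjl
        refine ⟨hne _ _ _ _ (fun h => hjl ((Fin.castSucc_injective _) h)) (hparts' j).1 (hparts' l).1,
          ?_, hne _ _ _ _ (fun h => hjl ((Fin.succ_injective _) h)) (hparts' j).2 (hparts' l).2⟩
        by_cases hc : (j : ℕ) = (l : ℕ) + 1
        · have hlk : (l : ℕ) < k := by have := j.isLt; omega
          have hbl : (Fin.snoc b v : Fin (k+1) → V) l = b ⟨l, hlk⟩ := by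
            have hl : l = Fin.castSucc ⟨l, hlk⟩ := Fin.ext rfl
            conv_lhs => rw [hl]
            rw [Fin.snoc_castSucc]
          rw [hbl]
          by_cases hjk : (j : ℕ) = k
          · have hj : j = Fin.last k := Fin.ext hjk
            rw [hj, Fin.snoc_last]
            intro h
            exact hu2 (by rw [h]; exact Finset.mem_image_of_mem b (Finset.mem_univ _))
          · have hjk' : (j : ℕ) < k := by have := j.isLt; omega
            have hj : j = Fin.castSucc ⟨j, hjk'⟩ := Fin.ext rfl
            conv_lhs => rw [hj]
            rw [Fin.snoc_castSucc]
            refine (hD ⟨j, hjk'⟩ ⟨l, hlk⟩ ?_).2.1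
            intro h
            rw [Fin.ext_iff] at h
            simp at h
            omega
        · refine hne _ _ _ _ ?_ (hparts' j).1 (hparts' l).2
          intro h
          rw [Fin.ext_iff] at h
          simp at h
          omega
      exact IH (k+1) (by omega) (Fin.snoc idx i) (Fin.snoc a u) (Fin.snoc b v)
        hinj' hmem' hadj' hparts' hD'
    · right
      have hlastmem : idx (Fin.last k) ∈ Finset.image idx Finset.univ :=
        Finset.mem_image_of_mem idx (Finset.mem_univ _)
      refine ⟨Finset.image idx Finset.univ, ?_, ⟨_, hlastmem⟩, ?_,
        idx (Fin.last k), hlastmem, I (idx (Fin.last k)) \ Finset.image b Finset.univ,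
        Finset.sdiff_subset, ?_, ?_⟩
      · intro x hx
        obtain ⟨j, _, rfl⟩ := Finset.mem_image.mp hx
        exact hmem j
      · refine le_trans Finset.card_image_le ?_
        simp only [Finset.card_univ, Fintype.card_fin]
        omega
      · have h1 := Finset.le_card_sdiff (Finset.image b Finset.univ) (I (idx (Fin.last k)))
        have h2 : (Finset.image b Finset.univ).card ≤ k := by
          refine le_trans Finset.card_image_le ?_
          simp
        have h3 := hcard (idx (Fin.last k))
        omega
      · intro u hu i hiR hiP v hv hadj'
        exact hex ⟨i, ⟨hiR, hiP⟩, u, hu, v, hv, hadj'⟩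

/-- Let `m ≥ 3d` and let `G` be a graph whose vertex set is partitioned into independent
sets `I 1, …, I s`, each of size `m`, with `α(G) < v(G)/(12 d)`. Then there are distinct
indices `i 0, …, i d` and a matching of size `d` with exactly one edge between
`I (i (j-1))` and `I (i j)` for each `j ∈ [d]`. -/
theorem stmt9 {V : Type*} [Fintype V] [DecidableEq V] (G : SimpleGraph V)
    (m d s : ℕ) (hmd : 3 * d ≤ m)
    (I : Fin s → Finset V)
    (hdisj : ∀ i j, i ≠ j → Disjoint (I i) (I j))
    (hcover : ∀ v : V, ∃ i, v ∈ I i)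
    (hcard : ∀ i, (I i).card = m)
    (hindep : ∀ i, ∀ u ∈ I i, ∀ v ∈ I i, ¬ G.Adj u v)
    (hα : ∀ t : Finset V, (∀ u ∈ t, ∀ v ∈ t, u ≠ v → ¬ G.Adj u v) →
        (t.card : ℝ) < (Fintype.card V : ℝ) / (12 * d)) :
    ∃ idx : Fin (d + 1) → Fin s, Function.Injective idx ∧
      ∃ a b : Fin d → V, (∀ j, G.Adj (a j) (b j)) ∧
        (∀ j : Fin d, a j ∈ I (idx j.castSucc) ∧ b j ∈ I (idx j.succ)) ∧
        (∀ j k : Fin d, j ≠ k → a j ≠ a k ∧ a j ≠ b k ∧ b j ≠ b k) := by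
  classical
  -- total vertex count
  have huniv : (Finset.univ : Finset V) = Finset.univ.biUnion I := by
    refine Finset.eq_univ_of_forall ?_ |>.symm
    intro v
    obtain ⟨i, hi⟩ := hcover v
    exact Finset.mem_biUnion.mpr ⟨i, Finset.mem_univ i, hi⟩
  have hcardV : Fintype.card V = m * s := by
    rw [← Finset.card_univ, huniv,
      Finset.card_biUnion (fun i _ j _ hij => hdisj i j hij)]
    simp [hcard, Finset.card_univ, mul_comm]
  suffices main : ∀ n (R : Finset (Fin s)) (T : Finset V), R.card ≤ n →
      (∀ u ∈ T, ∀ v ∈ T, u ≠ v → ¬ G.Adj u v) →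
      (∀ u ∈ T, ∀ i ∈ R, ∀ v ∈ I i, ¬ G.Adj u v ∧ u ∉ I i) →
      ((m - 2*d) * s ≤ d * T.card + (m - 2*d) * R.card) →
      (∃ idx : Fin (d + 1) → Fin s, Function.Injective idx ∧
        ∃ a b : Fin d → V, (∀ j, G.Adj (a j) (b j)) ∧
          (∀ j : Fin d, a j ∈ I (idx j.castSucc) ∧ b j ∈ I (idx j.succ)) ∧
          (∀ j k : Fin d, j ≠ k → a j ≠ a k ∧ a j ≠ b k ∧ b j ≠ b k)) by
    refine main s Finset.univ ∅ ?_ (by simp) (by simp) ?_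
    · simp
    · simp [Finset.card_univ]
  intro n
  induction n with
  | zero =>
    intro R T hRn hTind hTsep hcount
    exfalso
    have hR0 : R.card = 0 := by omega
    rw [hR0, Nat.mul_zero, Nat.add_zero] at hcount
    have h1 := hα T hTind
    rw [hcardV] at h1
    rcases Nat.eq_zero_or_pos d with rfl | hd
    · simp at h1
      have : (0:ℝ) ≤ (T.card : ℝ) := by positivity
      linarith
    · have hd' : (0:ℝ) < 12 * (d:ℝ) := by
        have : (0:ℝ) < (d:ℝ) := by exact_mod_cast hd
        linarith
      rw [lt_div_iff₀ hd'] at h1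
      have hB : T.card * (12 * d) < m * s := by exact_mod_cast h1
      have hs : 0 < s := by
        rcases Nat.eq_zero_or_pos s with rfl | h
        · simp at hB
        · exact h
      have key : d * (12 * ((m - 2*d) * s)) < d * (m * s) := by
        calc d * (12 * ((m - 2*d) * s)) = ((m - 2*d) * s) * (12 * d) := by ring
        _ ≤ (d * T.card) * (12 * d) := Nat.mul_le_mul_right _ hcount
        _ = d * (T.card * (12 * d)) := by ring
        _ < d * (m * s) := mul_lt_mul_of_pos_left hB hd
      have key2 : 12 * ((m - 2*d) * s) < m * s := Nat.lt_of_mul_lt_mul_left key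
      have key3 : (12 * (m - 2*d)) * s < m * s := by
        rw [mul_assoc]; exact key2
      have key4 : 12 * (m - 2*d) < m :=
        lt_of_mul_lt_mul_right key3 (Nat.zero_le s)
      omega
  | succ n IH =>
    intro R T hRn hTind hTsep hcount
    by_cases hRe : R.Nonempty
    · rcases lemA_stmt9 G m d s I hdisj hcard R hRe with hC | ⟨P, hPR, hPne, hPd, e, heP, S, hSI, hScard, hSsep⟩
      · exact hC
      · have hTSdisj : Disjoint T S := by
          rw [Finset.disjoint_left]
          intro u hu huS
          exact (hTsep u hu e (hPR heP) u (hSI huS)).2 (hSI huS)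
        refine IH (R \ P) (T ∪ S) ?_ ?_ ?_ ?_
        · have hc1 : (R \ P).card = R.card - P.card := Finset.card_sdiff_of_subset hPR
          have hc2 : P.card ≤ R.card := Finset.card_le_card hPR
          have hc3 : 1 ≤ P.card := Finset.card_pos.mpr hPne
          omega
        · intro u hu v hv huv
          rcases Finset.mem_union.mp hu with hu' | hu' <;>
            rcases Finset.mem_union.mp hv with hv' | hv'
          · exact hTind u hu' v hv' huv
          · exact (hTsep u hu' e (hPR heP) v (hSI hv')).1
          · intro h
            exact (hTsep v hv' e (hPR heP) u (hSI hu')).1 h.symm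
          · exact hindep e u (hSI hu') v (hSI hv')
        · intro u hu i hi v hv
          have hiR : i ∈ R := (Finset.mem_sdiff.mp hi).1
          have hiP : i ∉ P := (Finset.mem_sdiff.mp hi).2
          rcases Finset.mem_union.mp hu with hu' | hu'
          · exact hTsep u hu' i hiR v hv
          · constructor
            · exact hSsep u hu' i hiR hiP v hv
            · intro h
              have hei : e ≠ i := fun he => hiP (he ▸ heP)
              exact (Finset.disjoint_left.mp (hdisj e i hei) (hSI hu')) h
        · have hcU : (T ∪ S).card = T.card + S.card := Finset.card_union_of_disjoint hTSdisj
          have hcS : (R \ P).card = R.card - P.card := Finset.card_sdiff_of_subset hPR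
          have hc2 : P.card ≤ R.card := Finset.card_le_card hPR
          rw [hcU, hcS]
          have h1 : (m - 2*d) * P.card ≤ d * S.card := by
            calc (m - 2*d) * P.card ≤ S.card * d := Nat.mul_le_mul hScard hPd
            _ = d * S.card := Nat.mul_comm _ _
          have h2 : (m - 2*d) * (R.card - P.card) + (m - 2*d) * P.card = (m - 2*d) * R.card := by
            rw [← Nat.mul_add, Nat.sub_add_cancel hc2]
          have h3 : d * (T.card + S.card) = d * T.card + d * S.card := by ring
          linarith
    · have hR0 : R = ∅ := Finset.not_nonempty_iff_eq_empty.mp hRe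
      exact IH R T (by simp [hR0]) hTind hTsep hcount
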